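/- If P ⊆ ℝ^n is a polyhedron and (A^=, b^=) denotes the subsystem of inequalities aⁱx ≤ bᵢ that hold with equality at every point of P, then dim(P) + rank(A^=, b^=) = n. -/

import Mathlib

set_option maxHeartbeats 1000000 in
open Matrix in
/-- For a nonempty polyhedron `P = {x : A x ≤ b}` in ℝⁿ, if `I` is the set of rows
whose inequalities are tight at every point of `P`, then
`dim P + rank (A^=, b^=) = n`, where the dimension `d` of `P` is one less than the
maximal number of affinely independent points of `P`. -/
theorem stmt3 (n m : ℕ) (A : Matrix (Fin m) (Fin n) ℝ) (b : Fin m → ℝ)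
    (P : Set (Fin n → ℝ)) (hP : P = {x | ∀ i, ∑ j, A i j * x j ≤ b i})
    (hPne : P.Nonempty)
    (I : Set (Fin m)) (hI : I = {i | ∀ x ∈ P, ∑ j, A i j * x j = b i})
    (Aeq : Matrix I (Fin n ⊕ Unit) ℝ)
    (hAeq : Aeq = fun i j => Sum.elim (fun j' => A i.1 j') (fun _ => b i.1) j)
    (d : ℕ)
    (hdim₁ : ∃ x : Fin (d + 1) → (Fin n → ℝ), (∀ i, x i ∈ P) ∧
        ∀ lam : Fin (d + 1) → ℝ,
          ∑ i, lam i • x i = 0 → ∑ i, lam i = 0 → ∀ i, lam i = 0)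
    (hdim₂ : ∀ x : Fin (d + 2) → (Fin n → ℝ), (∀ i, x i ∈ P) →
        ¬ ∀ lam : Fin (d + 2) → ℝ,
            ∑ i, lam i • x i = 0 → ∑ i, lam i = 0 → ∀ i, lam i = 0) :
    d + Aeq.rank = n := by
  classical
  obtain ⟨x₀, hx₀P⟩ := hPne
  haveI : Fintype ↥I := Fintype.ofFinite _
  have hφ : ∀ (x : Fin n → ℝ) (i : Fin m), A.mulVecLin x i = ∑ j, A i j * x j := by
    intro x i
    simp [Matrix.mulVecLin_apply, Matrix.mulVec, dotProduct]
  have hmemP : ∀ x, x ∈ P ↔ ∀ i, A.mulVecLin x i ≤ b i := by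
    intro x
    simp only [hP, Set.mem_setOf_eq, hφ]
  have hmemI : ∀ i : Fin m, i ∈ I ↔ ∀ x ∈ P, A.mulVecLin x i = b i := by
    intro i
    simp only [hI, Set.mem_setOf_eq, hφ]
  set A' : Matrix ↥I (Fin n) ℝ := Matrix.of (fun i j => A i.1 j) with hA'
  set ψ : (Fin n → ℝ) →ₗ[ℝ] (↥I → ℝ) := A'.mulVecLin with hψdef
  have hψ : ∀ (x : Fin n → ℝ) (i : ↥I), ψ x i = A.mulVecLin x i.1 := by
    intro x i
    simp [hψdef, hA', Matrix.mulVecLin_apply, Matrix.mulVec, dotProduct, hφ]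
  set W : Submodule ℝ (Fin n → ℝ) := LinearMap.ker ψ with hW
  -- the b-column is in the span of the A-columns, so rank Aeq = rank A'
  have hbrow : ∀ i : ↥I, b i.1 = ψ x₀ i := by
    intro i
    rw [hψ]
    exact ((hmemI i.1).mp i.2 x₀ hx₀P).symm
  have hrange : LinearMap.range (Matrix.mulVecLin Aeq) = LinearMap.range ψ := by
    apply le_antisymm
    · rintro _ ⟨v, rfl⟩
      refine ⟨(fun j => v (Sum.inl j)) + v (Sum.inr ()) • x₀, ?_⟩
      funext i
      have h1 : ψ ((fun j => v (Sum.inl j)) + v (Sum.inr ()) • x₀) i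
          = ψ (fun j => v (Sum.inl j)) i + v (Sum.inr ()) * ψ x₀ i := by
        rw [map_add, _root_.map_smul]
        simp
      rw [h1, ← hbrow i]
      rw [Matrix.mulVecLin_apply Aeq]
      simp only [hψ, hφ, hAeq, Matrix.mulVecLin_apply, Matrix.mulVec, dotProduct,
        Fintype.sum_sum_type]
      simp [mul_comm]
    · rintro _ ⟨v, rfl⟩
      refine ⟨Sum.elim v 0, ?_⟩
      funext i
      rw [Matrix.mulVecLin_apply]
      simp only [hψ, hφ, hAeq, Matrix.mulVecLin_apply, Matrix.mulVec, dotProduct,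
        Fintype.sum_sum_type]
      simp
  have hrank : Aeq.rank = Module.finrank ℝ (LinearMap.range ψ) := by
    show Module.finrank ℝ (LinearMap.range (Matrix.mulVecLin Aeq)) = _
    rw [hrange]
  have hrn : Module.finrank ℝ (LinearMap.range ψ) + Module.finrank ℝ W = n := by
    have h := LinearMap.finrank_range_add_finrank_ker ψ
    rwa [Module.finrank_fin_fun] at h
  -- Step A : d ≤ finrank W
  obtain ⟨x, hxP, hxind⟩ := hdim₁
  have hdle : d ≤ Module.finrank ℝ W := by
    have hvmem : ∀ k : Fin d, x k.succ - x 0 ∈ W := by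
      intro k
      have h0 : ψ (x k.succ - x 0) = 0 := by
        rw [map_sub, sub_eq_zero]
        funext i
        rw [hψ, hψ, (hmemI i.1).mp i.2 _ (hxP k.succ), (hmemI i.1).mp i.2 _ (hxP 0)]
      exact LinearMap.mem_ker.mpr h0
    have hli : LinearIndependent ℝ (fun k : Fin d => (⟨x k.succ - x 0, hvmem k⟩ : W)) := by
      rw [Fintype.linearIndependent_iff]
      intro g hg
      have hg' : ∑ k, g k • (x k.succ - x 0) = (0 : Fin n → ℝ) := by
        calc ∑ k, g k • (x k.succ - x 0)
            = ((∑ k, g k • (⟨x k.succ - x 0, hvmem k⟩ : W) : W) : Fin n → ℝ) := by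
              rw [Submodule.coe_sum]; simp
          _ = 0 := by rw [hg]; rfl
      set lam : Fin (d + 1) → ℝ := Fin.cases (-∑ k, g k) g with hlam
      have h1 : ∑ i, lam i = 0 := by
        rw [Fin.sum_univ_succ]
        simp [hlam]
      have h2 : ∑ i, lam i • x i = 0 := by
        rw [Fin.sum_univ_succ]
        simp only [hlam, Fin.cases_zero, Fin.cases_succ]
        have h3 := hg'
        simp only [smul_sub, Finset.sum_sub_distrib] at h3
        have h4 : ∑ k, g k • x k.succ = ∑ k, g k • x 0 := sub_eq_zero.mp h3
        rw [neg_smul, Finset.sum_smul, h4, neg_add_cancel]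
      have hall := hxind lam h2 h1
      intro k
      have := hall k.succ
      simpa [hlam] using this
    have := hli.fintype_card_le_finrank
    simpa using this
  -- construct a point of P that is strict on every non-tight row
  have hy : ∀ i : Fin m, ∃ y, y ∈ P ∧ (i ∉ I → A.mulVecLin y i < b i) := by
    intro i
    by_cases hiI : i ∈ I
    · exact ⟨x₀, hx₀P, fun h => absurd hiI h⟩
    · rw [hmemI] at hiI
      push_neg at hiI
      obtain ⟨yy, hyP, hne⟩ := hiI
      exact ⟨yy, hyP, fun _ => lt_of_le_of_ne ((hmemP yy).mp hyP i) hne⟩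
  choose y hyP hystrict using hy
  set z : Fin n → ℝ := (((m : ℝ) + 1)⁻¹) • (x₀ + ∑ i, y i) with hz
  have hmpos : (0 : ℝ) < (m : ℝ) + 1 := by positivity
  have hzval : ∀ i, A.mulVecLin z i
      = ((m : ℝ) + 1)⁻¹ * (A.mulVecLin x₀ i + ∑ k, A.mulVecLin (y k) i) := by
    intro i
    rw [hz, _root_.map_smul, map_add, map_sum]
    simp [Finset.sum_apply]
  have hysum : ∀ i, ∑ k, A.mulVecLin (y k) i ≤ (m : ℝ) * b i := by
    intro i
    have h5 : ∑ k, A.mulVecLin (y k) i ≤ ∑ _k : Fin m, b i :=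
      Finset.sum_le_sum (fun k _ => (hmemP _).mp (hyP k) i)
    simpa using h5
  have hzP : z ∈ P := by
    rw [hmemP]
    intro i
    rw [hzval]
    have h2 := (hmemP x₀).mp hx₀P i
    have h1 : A.mulVecLin x₀ i + ∑ k, A.mulVecLin (y k) i ≤ ((m : ℝ) + 1) * b i := by
      have := hysum i
      nlinarith
    calc ((m : ℝ) + 1)⁻¹ * (A.mulVecLin x₀ i + ∑ k, A.mulVecLin (y k) i)
        ≤ ((m : ℝ) + 1)⁻¹ * (((m : ℝ) + 1) * b i) :=
          mul_le_mul_of_nonneg_left h1 (by positivity)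
      _ = b i := by field_simp
  have hzstrict : ∀ i, i ∉ I → A.mulVecLin z i < b i := by
    intro i hiI
    rw [hzval]
    have hstr : ∑ k, A.mulVecLin (y k) i < ∑ _k : Fin m, b i := by
      apply Finset.sum_lt_sum (fun k _ => (hmemP _).mp (hyP k) i)
      exact ⟨i, Finset.mem_univ i, hystrict i hiI⟩
    have hstr' : ∑ k, A.mulVecLin (y k) i < (m : ℝ) * b i := by simpa using hstr
    have h2 := (hmemP x₀).mp hx₀P i
    have h1 : A.mulVecLin x₀ i + ∑ k, A.mulVecLin (y k) i < ((m : ℝ) + 1) * b i := by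
      nlinarith
    calc ((m : ℝ) + 1)⁻¹ * (A.mulVecLin x₀ i + ∑ k, A.mulVecLin (y k) i)
        < ((m : ℝ) + 1)⁻¹ * (((m : ℝ) + 1) * b i) := by
          apply mul_lt_mul_of_pos_left h1 (by positivity)
      _ = b i := by field_simp
  -- we can move from z in any kernel direction and stay in P
  have hkey : ∀ w : Fin n → ℝ, w ∈ W → ∃ ε : ℝ, 0 < ε ∧ z + ε • w ∈ P := by
    intro w hw
    have hwrow : ∀ i, i ∈ I → A.mulVecLin w i = 0 := by
      intro i hi
      have h0 : ψ w = 0 := LinearMap.mem_ker.mp hw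
      have h1 := congrFun h0 (⟨i, hi⟩ : ↥I)
      rw [hψ] at h1
      simpa using h1
    set g : Fin m → ℝ := fun i =>
      if 0 < A.mulVecLin w i then (b i - A.mulVecLin z i) / (A.mulVecLin w i) else 1 with hg
    set S : Finset ℝ := insert 1 (Finset.univ.image g) with hS
    have hSne : S.Nonempty := ⟨1, Finset.mem_insert_self _ _⟩
    set ε : ℝ := S.min' hSne with hε
    have hεpos : 0 < ε := by
      rw [hε, Finset.lt_min'_iff]
      intro r hr
      rcases Finset.mem_insert.mp hr with h | h
      · simp [h]
      · obtain ⟨i, -, rfl⟩ := Finset.mem_image.mp h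
        by_cases hpos : 0 < A.mulVecLin w i
        · rw [show g i = (b i - A.mulVecLin z i) / A.mulVecLin w i from if_pos hpos]
          apply div_pos ?_ hpos
          have hiI : i ∉ I := fun hiI => by simp [hwrow i hiI] at hpos
          linarith [hzstrict i hiI]
        · rw [show g i = 1 from if_neg hpos]
          exact one_pos
    refine ⟨ε, hεpos, ?_⟩
    rw [hmemP]
    intro i
    have hcomp : A.mulVecLin (z + ε • w) i = A.mulVecLin z i + ε * A.mulVecLin w i := by
      rw [map_add, _root_.map_smul]
      simp
    rw [hcomp]
    by_cases hiI : i ∈ I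
    · rw [hwrow i hiI]
      simpa using (hmemP z).mp hzP i
    · by_cases hpos : 0 < A.mulVecLin w i
      · have hle : ε ≤ g i := by
          rw [hε]
          exact Finset.min'_le _ _
            (Finset.mem_insert_of_mem (Finset.mem_image_of_mem g (Finset.mem_univ i)))
        rw [show g i = (b i - A.mulVecLin z i) / A.mulVecLin w i from if_pos hpos] at hle
        have h6 := mul_le_mul_of_nonneg_right hle (le_of_lt hpos)
        rw [div_mul_cancel₀ _ (ne_of_gt hpos)] at h6
        linarith
      · push_neg at hpos
        have h7 : 0 ≤ ε * (-(A.mulVecLin w i)) := mul_nonneg hεpos.le (by linarith)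
        have h8 := hzstrict i hiI
        nlinarith
  -- Step B : finrank W ≤ d
  have hdge : Module.finrank ℝ W ≤ d := by
    by_contra hcon
    push_neg at hcon
    have hlt : d + 1 ≤ Module.finrank ℝ W := hcon
    set bW := Module.finBasis ℝ W with hbW
    set w : Fin (Module.finrank ℝ W) → (Fin n → ℝ) := fun k => ((bW k : W) : Fin n → ℝ)
      with hwdef
    have hwmem : ∀ k, w k ∈ W := fun k => (bW k).2
    have hwli : LinearIndependent ℝ w := by
      have := bW.linearIndependent.map' W.subtype (Submodule.ker_subtype W)
      exact this
    choose ε hεpos hεP using fun k : Fin (d + 1) => hkey (w (Fin.castLE hlt k)) (hwmem _)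
    set v : Fin (d + 2) → (Fin n → ℝ) :=
      Fin.cases 0 (fun k => ε k • w (Fin.castLE hlt k)) with hv
    set q : Fin (d + 2) → (Fin n → ℝ) := fun i => z + v i with hq
    have hqP : ∀ i, q i ∈ P := by
      intro i
      induction i using Fin.cases with
      | zero => simpa [hq, hv] using hzP
      | succ k => simpa [hq, hv] using hεP k
    apply hdim₂ q hqP
    intro lam hsum hsum0
    have hv0 : ∑ i, lam i • v i = 0 := by
      have hsplit : ∑ i, lam i • (z + v i) = ∑ i, lam i • z + ∑ i, lam i • v i := by
        simp [smul_add, Finset.sum_add_distrib]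
      rw [hq] at hsum
      simp only [hsplit] at hsum
      rw [← Finset.sum_smul, hsum0, zero_smul, zero_add] at hsum
      exact hsum
    have hc : ∀ k : Fin (d + 1), lam k.succ * ε k = 0 := by
      have hli2 : LinearIndependent ℝ (fun k : Fin (d + 1) => w (Fin.castLE hlt k)) :=
        hwli.comp _ (Fin.castLE_injective hlt)
      rw [Fintype.linearIndependent_iff] at hli2
      apply hli2
      rw [Fin.sum_univ_succ] at hv0
      simpa [hv, mul_smul] using hv0
    have hsucc : ∀ k : Fin (d + 1), lam k.succ = 0 := by
      intro k
      rcases mul_eq_zero.mp (hc k) with h | h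
      · exact h
      · exact absurd h (ne_of_gt (hεpos k))
    intro i
    induction i using Fin.cases with
    | zero =>
      rw [Fin.sum_univ_succ] at hsum0
      simpa [hsucc] using hsum0
    | succ k => exact hsucc k
  have hd : d = Module.finrank ℝ W := le_antisymm hdle hdge
  rw [hd, hrank]
  omega
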